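/- Let h ∈ ℝ and define f(s) = E_{Z'}[(E_Z[sign(h + √s Z' + √(1−s) Z)])²] for s ∈ (0,1), where Z, Z' are independent standard Gaussians. Then f is differentiable with f'(s) = (2/(π√(1−s²))) exp(−h²/(1+s)). -/

import Mathlib

open MeasureTheory Real ProbabilityTheory Set Filter

noncomputable def sgn (a : ℝ) : ℝ := if 0 ≤ a then 1 else -1

namespace Stmt8

noncomputable def phi (x : ℝ) : ℝ := (Real.sqrt (2 * Real.pi))⁻¹ * Real.exp (-x ^ 2 / 2)

lemma gpdf_eq : gaussianPDFReal 0 1 = phi := by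
  ext x
  simp only [gaussianPDFReal, phi, NNReal.coe_one, mul_one, sub_zero]

lemma phi_nonneg (x : ℝ) : 0 ≤ phi x := by
  unfold phi; positivity

lemma phi_cont : Continuous phi := by
  unfold phi; fun_prop

lemma phi_int : Integrable phi := by
  rw [← gpdf_eq]; exact integrable_gaussianPDFReal 0 1

lemma phi_total : ∫ x, phi x = 1 := by
  rw [← gpdf_eq]; exact integral_gaussianPDFReal_eq_one 0 one_ne_zero

lemma phi_le_one (x : ℝ) : phi x ≤ 1 := by
  unfold phi
  have h1 : Real.exp (-x ^ 2 / 2) ≤ 1 := by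
    rw [Real.exp_le_one_iff]; nlinarith [sq_nonneg x]
  have h2 : (Real.sqrt (2 * Real.pi))⁻¹ ≤ 1 := by
    rw [inv_le_one_iff₀]
    right
    rw [Real.one_le_sqrt]
    nlinarith [Real.pi_gt_three]
  calc (Real.sqrt (2 * Real.pi))⁻¹ * Real.exp (-x ^ 2 / 2) ≤ 1 * 1 := by
        apply mul_le_mul h2 h1 (Real.exp_nonneg _) one_pos.le
    _ = 1 := by ring

lemma phi_even (x : ℝ) : phi (-x) = phi x := by unfold phi; ring_nf

noncomputable def Φ (x : ℝ) : ℝ := ∫ t in Iic x, phi t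

lemma Φ_nonneg (x : ℝ) : 0 ≤ Φ x :=
  setIntegral_nonneg measurableSet_Iic fun t _ => phi_nonneg t

lemma Φ_le_one (x : ℝ) : Φ x ≤ 1 := by
  rw [← phi_total]
  exact setIntegral_le_integral phi_int (ae_of_all _ phi_nonneg)

lemma Φ_hasDeriv (x : ℝ) : HasDerivAt Φ (phi x) x := by
  have hfun : ∀ y, Φ y = (∫ t in Iic 0, phi t) + ∫ t in (0:ℝ)..y, phi t := by
    intro y
    rw [← intervalIntegral.integral_Iic_sub_Iic phi_int.integrableOn phi_int.integrableOn]
    unfold Φ; ring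
  have h1 : HasDerivAt (fun y => (∫ t in Iic 0, phi t) + ∫ t in (0:ℝ)..y, phi t) (phi x) x := by
    apply HasDerivAt.const_add
    exact intervalIntegral.integral_hasDerivAt_right phi_int.intervalIntegrable
      (phi_cont.stronglyMeasurableAtFilter _ _) phi_cont.continuousAt
  exact h1.congr_of_eventuallyEq (Filter.Eventually.of_forall hfun)

lemma Φ_cont : Continuous Φ :=
  continuous_iff_continuousAt.2 fun x => (Φ_hasDeriv x).continuousAt

noncomputable def G (x : ℝ) : ℝ := 1 - 2 * Φ (-x)

lemma G_cont : Continuous G := by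
  unfold G
  exact continuous_const.sub (continuous_const.mul (Φ_cont.comp continuous_neg))

lemma abs_G_le_one (x : ℝ) : |G x| ≤ 1 := by
  unfold G
  rw [abs_le]
  constructor <;> nlinarith [Φ_nonneg (-x), Φ_le_one (-x)]

lemma G_hasDeriv (x : ℝ) : HasDerivAt G (2 * phi x) x := by
  unfold G
  have h1 : HasDerivAt (fun y : ℝ => -y) (-1) x := (hasDerivAt_id x).neg
  have h2 := (Φ_hasDeriv (-x)).comp x h1
  have h3 := (h2.const_mul 2).const_sub 1
  refine h3.congr_deriv ?_
  rw [phi_even]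
  ring


lemma phi_hasDeriv (x : ℝ) : HasDerivAt phi (-x * phi x) x := by
  unfold phi
  have h1 : HasDerivAt (fun y : ℝ => -y ^ 2 / 2) (-x) x := by
    have := ((hasDerivAt_pow 2 x).neg).div_const 2
    exact this.congr_deriv (by ring)
  have h2 := (h1.exp).const_mul (Real.sqrt (2 * Real.pi))⁻¹
  exact h2.congr_deriv (by ring)

lemma gauss_Iio (a : ℝ) : ((gaussianReal 0 1) (Iio a)).toReal = Φ a := by
  rw [gaussianReal_apply_eq_integral 0 one_ne_zero]
  rw [ENNReal.toReal_ofReal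
    (setIntegral_nonneg measurableSet_Iio fun t _ => gaussianPDFReal_nonneg 0 1 t)]
  rw [gpdf_eq, ← integral_Iic_eq_integral_Iio]
  rfl

lemma integral_gaussianReal_eq (g : ℝ → ℝ) :
    ∫ x, g x ∂(gaussianReal 0 1) = ∫ x, phi x * g x := by
  rw [gaussianReal_of_var_ne_zero 0 one_ne_zero]
  have hd : (gaussianPDF 0 1) = fun x => ((Real.toNNReal (gaussianPDFReal 0 1 x) : NNReal) : ENNReal) := by
    ext x; rw [gaussianPDF]; rfl
  rw [hd, integral_withDensity_eq_integral_smul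
    ((measurable_gaussianPDFReal 0 1).real_toNNReal) g]
  apply integral_congr_ae
  filter_upwards with x
  rw [NNReal.smul_def, smul_eq_mul, Real.coe_toNNReal _ (gaussianPDFReal_nonneg 0 1 x), gpdf_eq]

lemma integrable_gaussianReal_iff (g : ℝ → ℝ) :
    Integrable g (gaussianReal 0 1) ↔ Integrable (fun x => phi x * g x) := by
  rw [gaussianReal_of_var_ne_zero 0 one_ne_zero]
  have hd : (gaussianPDF 0 1) = fun x => ((Real.toNNReal (gaussianPDFReal 0 1 x) : NNReal) : ENNReal) := by
    ext x; rw [gaussianPDF]; rfl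
  rw [hd, integrable_withDensity_iff_integrable_smul
    ((measurable_gaussianPDFReal 0 1).real_toNNReal)]
  constructor <;> intro hh <;> apply hh.congr <;> filter_upwards with x
  · rw [NNReal.smul_def, smul_eq_mul, Real.coe_toNNReal _ (gaussianPDFReal_nonneg 0 1 x), gpdf_eq]
  · rw [NNReal.smul_def, smul_eq_mul, Real.coe_toNNReal _ (gaussianPDFReal_nonneg 0 1 x), gpdf_eq]

lemma integral_sgn (c σ : ℝ) (hσ : 0 < σ) :
    ∫ z, sgn (c + σ * z) ∂(gaussianReal 0 1) = G (c / σ) := by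
  have hind : ∀ z, sgn (c + σ * z)
      = 1 - 2 * Set.indicator (Iio (-(c / σ))) (fun _ => (1:ℝ)) z := by
    intro z
    by_cases hz : z < -(c / σ)
    · have h2 : c + σ * z < 0 := by
        rw [← neg_div, lt_div_iff₀ hσ] at hz
        nlinarith
      rw [Set.indicator_of_mem (Set.mem_Iio.2 hz), sgn, if_neg (by linarith)]
      ring
    · have h2 : 0 ≤ c + σ * z := by
        push_neg at hz
        rw [← neg_div, div_le_iff₀ hσ] at hz
        nlinarith
      rw [Set.indicator_of_notMem (by simpa using hz), sgn, if_pos h2]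
      ring
  calc ∫ z, sgn (c + σ * z) ∂(gaussianReal 0 1)
      = ∫ z, (1 - 2 * Set.indicator (Iio (-(c / σ))) (fun _ => (1:ℝ)) z) ∂(gaussianReal 0 1) := by
        exact integral_congr_ae (ae_of_all _ hind)
    _ = (∫ _, (1:ℝ) ∂(gaussianReal 0 1))
        - ∫ z, 2 * Set.indicator (Iio (-(c / σ))) (fun _ => (1:ℝ)) z ∂(gaussianReal 0 1) := by
        apply integral_sub (integrable_const 1)
        exact (((integrable_const (1:ℝ)).indicator measurableSet_Iio).const_mul 2)
    _ = 1 - 2 * ((gaussianReal 0 1) (Iio (-(c / σ)))).toReal := by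
        rw [integral_const, integral_const_mul, integral_indicator_const _ measurableSet_Iio]
        simp [Measure.real]
    _ = G (c / σ) := by rw [gauss_Iio, G]

lemma integrable_phi_mul_abs : Integrable (fun z => phi z * |z|) := by
  have h0 : Integrable (fun z : ℝ => z * Real.exp (-(2⁻¹:ℝ) * z ^ 2)) :=
    integrable_mul_exp_neg_mul_sq (by norm_num)
  have h1 := (h0.abs).const_mul (Real.sqrt (2 * Real.pi))⁻¹
  apply h1.congr
  filter_upwards with z
  rw [abs_mul, abs_of_pos (Real.exp_pos _)]
  unfold phi
  rw [show -(2⁻¹:ℝ) * z ^ 2 = -z ^ 2 / 2 by ring]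
  ring

lemma integrable_phi_mul_linear (a b : ℝ) : Integrable (fun z => phi z * (a + b * |z|)) := by
  have h1 := (phi_int.const_mul a)
  have h2 := integrable_phi_mul_abs.const_mul b
  apply (h1.add h2).congr
  filter_upwards with z
  simp only [Pi.add_apply]
  ring


noncomputable def Fu (h u z : ℝ) : ℝ := (G ((h + Real.sqrt u * z) / Real.sqrt (1 - u))) ^ 2

noncomputable def Fd (h u z : ℝ) : ℝ :=
  4 * G ((h + Real.sqrt u * z) / Real.sqrt (1 - u))
    * phi ((h + Real.sqrt u * z) / Real.sqrt (1 - u))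
    * (z / (2 * Real.sqrt u * Real.sqrt (1 - u))
       + (h + Real.sqrt u * z) / (2 * (1 - u) * Real.sqrt (1 - u)))

lemma hasDeriv_Fu (h z : ℝ) {u : ℝ} (hu0 : 0 < u) (hu1 : u < 1) :
    HasDerivAt (fun v => Fu h v z) (Fd h u z) u := by
  have h1u : (0:ℝ) < 1 - u := by linarith
  have hbpos : 0 < Real.sqrt (1 - u) := Real.sqrt_pos.2 h1u
  have hapos : 0 < Real.sqrt u := Real.sqrt_pos.2 hu0
  have h2 : HasDerivAt (fun v : ℝ => 1 - v) (-1) u := (hasDerivAt_id u).const_sub 1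
  have h3 : HasDerivAt (fun v => Real.sqrt (1 - v)) (1 / (2 * Real.sqrt (1 - u)) * -1) u :=
    (Real.hasDerivAt_sqrt h1u.ne').comp u h2
  have h4 : HasDerivAt (fun v => h + Real.sqrt v * z) (1 / (2 * Real.sqrt u) * z) u :=
    ((Real.hasDerivAt_sqrt hu0.ne').mul_const z).const_add h
  have h5 := h4.div h3 hbpos.ne'
  have h6 := (G_hasDeriv ((h + Real.sqrt u * z) / Real.sqrt (1 - u))).comp u h5
  have h7 := h6.pow 2
  refine h7.congr_deriv ?_
  simp only [Function.comp_apply, Pi.div_apply]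
  unfold Fd
  have hb2 : Real.sqrt (1 - u) ^ 2 = 1 - u := Real.sq_sqrt h1u.le
  rw [← hb2]
  set a := Real.sqrt u
  set b := Real.sqrt (1 - u)
  have hphi := phi_nonneg ((h + a * z) / b)
  field_simp
  rw [Real.sqrt_sq hbpos.le]
  ring


section IBP

variable (h t r : ℝ)

noncomputable def Psi (z : ℝ) : ℝ :=
  G ((h + t * z) / r) * (phi ((h + t * z) / r) * phi z)

noncomputable def PsiD (z : ℝ) : ℝ :=
  2 * (t / r) * phi ((h + t * z) / r) ^ 2 * phi z
    - G ((h + t * z) / r) * (phi ((h + t * z) / r) * phi z) * ((z + h * t) / r ^ 2)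

lemma hasDeriv_Psi (htr : t ^ 2 + r ^ 2 = 1) (hr : r ≠ 0) (z : ℝ) :
    HasDerivAt (Psi h t r) (PsiD h t r z) z := by
  have hw : HasDerivAt (fun z : ℝ => (h + t * z) / r) (t / r) z := by
    have := (((hasDerivAt_id z).const_mul t).const_add h).div_const r
    simpa using this
  have hG := (G_hasDeriv ((h + t * z) / r)).comp z hw
  have hpw := (phi_hasDeriv ((h + t * z) / r)).comp z hw
  have hpz := phi_hasDeriv z
  have htotal := hG.mul (hpw.mul hpz)
  refine htotal.congr_deriv ?_
  symm
  unfold PsiD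
  show _ = 2 * phi ((h + t * z) / r) * (t / r) * (phi ((h + t * z) / r) * phi z)
    + G ((h + t * z) / r) * (-((h + t * z) / r) * phi ((h + t * z) / r) * (t / r) * phi z
      + phi ((h + t * z) / r) * (-z * phi z))
  set W := (h + t * z) / r with hW
  have hkey : W * t * r + z * r ^ 2 = z + h * t := by
    rw [hW]
    field_simp
    linear_combination z * htr
  set A := G W
  set B := phi W
  set C := phi z
  rw [← hkey]
  field_simp
  ring

lemma abs_Psi_le (z : ℝ) : |Psi h t r z| ≤ phi z := by
  unfold Psi
  rw [abs_mul, abs_mul]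
  have h1 := abs_G_le_one ((h + t * z) / r)
  have h2 : |phi ((h + t * z) / r)| ≤ 1 := by
    rw [abs_of_nonneg (phi_nonneg _)]; exact phi_le_one _
  have h3 : |phi z| = phi z := abs_of_nonneg (phi_nonneg _)
  rw [h3]
  calc |G ((h + t * z) / r)| * (|phi ((h + t * z) / r)| * phi z) ≤ 1 * (1 * phi z) := by
        apply mul_le_mul h1 _ (mul_nonneg (abs_nonneg _) (phi_nonneg z)) one_pos.le
        exact mul_le_mul_of_nonneg_right h2 (phi_nonneg z)
    _ = phi z := by ring

lemma phi_tendsto_atTop : Filter.Tendsto phi Filter.atTop (nhds 0) := by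
  have h1 : Filter.Tendsto (fun z : ℝ => -z ^ 2 / 2) Filter.atTop Filter.atBot := by
    apply Filter.Tendsto.atBot_div_const (by norm_num : (0:ℝ) < 2)
    exact (tendsto_pow_atTop two_ne_zero).const_mul_atTop_of_neg (by norm_num : (-1:ℝ) < 0) |>.congr
      (fun x => by ring)
  have h2 := Real.tendsto_exp_atBot.comp h1
  have h3 := h2.const_mul (Real.sqrt (2 * Real.pi))⁻¹
  rw [mul_zero] at h3
  exact h3

lemma phi_tendsto_atBot : Filter.Tendsto phi Filter.atBot (nhds 0) := by
  have h0 : Filter.Tendsto (fun z : ℝ => z ^ 2) Filter.atBot Filter.atTop := by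
    have := (tendsto_pow_atTop (two_ne_zero)).comp tendsto_abs_atBot_atTop (α := ℝ)
    apply this.congr
    intro x
    simp [Function.comp, sq_abs]
  have h1 : Filter.Tendsto (fun z : ℝ => -z ^ 2 / 2) Filter.atBot Filter.atBot := by
    apply Filter.Tendsto.atBot_div_const (by norm_num : (0:ℝ) < 2)
    exact h0.const_mul_atTop_of_neg (by norm_num : (-1:ℝ) < 0) |>.congr (fun x => by ring)
  have h2 := Real.tendsto_exp_atBot.comp h1
  have h3 := h2.const_mul (Real.sqrt (2 * Real.pi))⁻¹
  rw [mul_zero] at h3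
  exact h3

lemma Psi_tendsto_atTop : Filter.Tendsto (Psi h t r) Filter.atTop (nhds 0) :=
  squeeze_zero_norm (fun z => abs_Psi_le h t r z) phi_tendsto_atTop

lemma Psi_tendsto_atBot : Filter.Tendsto (Psi h t r) Filter.atBot (nhds 0) :=
  squeeze_zero_norm (fun z => abs_Psi_le h t r z) phi_tendsto_atBot


lemma cont_w : Continuous (fun z : ℝ => (h + t * z) / r) := by fun_prop

lemma I1_int : Integrable (fun z => phi ((h + t * z) / r) ^ 2 * phi z) := by
  apply phi_int.mono'
  · exact (((phi_cont.comp (cont_w h t r)).pow 2).mul phi_cont).aestronglyMeasurable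
  · filter_upwards with z
    rw [Real.norm_eq_abs, abs_of_nonneg (mul_nonneg (pow_nonneg (phi_nonneg _) 2) (phi_nonneg z))]
    calc phi ((h + t * z) / r) ^ 2 * phi z ≤ 1 ^ 2 * phi z := by
          apply mul_le_mul_of_nonneg_right _ (phi_nonneg z)
          exact pow_le_pow_left₀ (phi_nonneg _) (phi_le_one _) 2
      _ = phi z := by ring

lemma I2_int (hr : r ≠ 0) :
    Integrable (fun z => G ((h + t * z) / r) * (phi ((h + t * z) / r) * phi z)
      * ((z + h * t) / r ^ 2)) := by
  apply (integrable_phi_mul_linear (|h * t| / r ^ 2) (1 / r ^ 2)).mono'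
  · apply Continuous.aestronglyMeasurable
    exact ((G_cont.comp (cont_w h t r)).mul ((phi_cont.comp (cont_w h t r)).mul phi_cont)).mul
      (by fun_prop)
  · filter_upwards with z
    rw [Real.norm_eq_abs, abs_mul, abs_mul, abs_mul]
    have hb := abs_Psi_le h t r z
    rw [Psi, abs_mul, abs_mul] at hb
    have hr2 : (0:ℝ) < r ^ 2 := by positivity
    have h2 : |(z + h * t) / r ^ 2| ≤ |h * t| / r ^ 2 + 1 / r ^ 2 * |z| := by
      rw [abs_div, abs_of_nonneg (sq_nonneg r)]
      calc |z + h * t| / r ^ 2 ≤ (|z| + |h * t|) / r ^ 2 := by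
            gcongr
            exact abs_add_le z (h * t)
        _ = |h * t| / r ^ 2 + 1 / r ^ 2 * |z| := by ring
    calc |G ((h + t * z) / r)| * (|phi ((h + t * z) / r)| * |phi z|) * |(z + h * t) / r ^ 2|
        ≤ phi z * (|h * t| / r ^ 2 + 1 / r ^ 2 * |z|) := by
          apply mul_le_mul hb h2 (abs_nonneg _) (phi_nonneg z)
      _ = phi z * (|h * t| / r ^ 2 + 1 / r ^ 2 * |z|) := rfl

lemma PsiD_int (hr : r ≠ 0) : Integrable (PsiD h t r) := by
  have := ((I1_int h t r).const_mul (2 * (t / r))).sub (I2_int h t r hr)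
  apply this.congr
  filter_upwards with z
  simp only [Pi.sub_apply]
  unfold PsiD
  ring

lemma integral_PsiD (htr : t ^ 2 + r ^ 2 = 1) (hr : r ≠ 0) :
    ∫ z, PsiD h t r z = 0 := by
  have hderiv := hasDeriv_Psi h t r htr hr
  have hint := PsiD_int h t r hr
  have hIoi : ∫ z in Ioi (0:ℝ), PsiD h t r z = 0 - Psi h t r 0 :=
    integral_Ioi_of_hasDerivAt_of_tendsto
      (hderiv 0).continuousAt.continuousWithinAt
      (fun x _ => hderiv x) hint.integrableOn (Psi_tendsto_atTop h t r)
  have hIic : ∫ z in Iic (0:ℝ), PsiD h t r z = Psi h t r 0 - 0 :=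
    integral_Iic_of_hasDerivAt_of_tendsto
      (hderiv 0).continuousAt.continuousWithinAt
      (fun x _ => hderiv x) hint.integrableOn (Psi_tendsto_atBot h t r)
  rw [← intervalIntegral.integral_Iic_add_Ioi hint.integrableOn hint.integrableOn, hIoi, hIic]
  ring

end IBP


lemma exp_arg_identity (h t r z : ℝ) (hr : r ≠ 0) (htr : t ^ 2 + r ^ 2 = 1) :
    -(((h + t * z) / r) ^ 2) / 2 + -(((h + t * z) / r) ^ 2) / 2 + -z ^ 2 / 2
      = -h ^ 2 / (1 + t ^ 2)
        + -((1 + t ^ 2) / (2 * r ^ 2) * (z + 2 * h * t / (1 + t ^ 2)) ^ 2) := by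
  have h1t : (0:ℝ) < 1 + t ^ 2 := by positivity
  have hr2 : r ^ 2 = 1 - t ^ 2 := by linarith
  have ht1 : 1 - t ^ 2 ≠ 0 := by rw [← hr2]; positivity
  rw [div_pow, hr2]
  field_simp
  ring

lemma J_eval (h t r : ℝ) (hr : 0 < r) (htr : t ^ 2 + r ^ 2 = 1) :
    ∫ z, phi ((h + t * z) / r) ^ 2 * phi z
      = ((Real.sqrt (2 * Real.pi))⁻¹) ^ 3 * Real.exp (-h ^ 2 / (1 + t ^ 2))
        * Real.sqrt (Real.pi / ((1 + t ^ 2) / (2 * r ^ 2))) := by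
  have ha : (0:ℝ) < (1 + t ^ 2) / (2 * r ^ 2) := by positivity
  have hpt : ∀ z, phi ((h + t * z) / r) ^ 2 * phi z
      = ((Real.sqrt (2 * Real.pi))⁻¹) ^ 3 * Real.exp (-h ^ 2 / (1 + t ^ 2))
        * Real.exp (-((1 + t ^ 2) / (2 * r ^ 2) * (z + 2 * h * t / (1 + t ^ 2)) ^ 2)) := by
    intro z
    calc phi ((h + t * z) / r) ^ 2 * phi z
        = ((Real.sqrt (2 * Real.pi))⁻¹) ^ 3
          * Real.exp (-(((h + t * z) / r) ^ 2) / 2 + -(((h + t * z) / r) ^ 2) / 2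
              + -z ^ 2 / 2) := by
          unfold phi
          rw [Real.exp_add, Real.exp_add]
          ring
      _ = _ := by
          rw [exp_arg_identity h t r z hr.ne' htr, Real.exp_add]
          ring
  calc ∫ z, phi ((h + t * z) / r) ^ 2 * phi z
      = ∫ z, ((Real.sqrt (2 * Real.pi))⁻¹) ^ 3 * Real.exp (-h ^ 2 / (1 + t ^ 2))
          * Real.exp (-((1 + t ^ 2) / (2 * r ^ 2) * (z + 2 * h * t / (1 + t ^ 2)) ^ 2)) := by
        exact integral_congr_ae (ae_of_all _ hpt)
    _ = ((Real.sqrt (2 * Real.pi))⁻¹) ^ 3 * Real.exp (-h ^ 2 / (1 + t ^ 2))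
          * ∫ z, Real.exp (-((1 + t ^ 2) / (2 * r ^ 2) * (z + 2 * h * t / (1 + t ^ 2)) ^ 2)) := by
        rw [integral_const_mul]
    _ = ((Real.sqrt (2 * Real.pi))⁻¹) ^ 3 * Real.exp (-h ^ 2 / (1 + t ^ 2))
          * ∫ z, Real.exp (-((1 + t ^ 2) / (2 * r ^ 2) * z ^ 2)) := by
        congr 1
        simpa using MeasureTheory.integral_add_right_eq_self
          (μ := volume) (fun z : ℝ => Real.exp (-((1 + t ^ 2) / (2 * r ^ 2) * z ^ 2)))
          (2 * h * t / (1 + t ^ 2))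
    _ = _ := by
        congr 1
        simp_rw [← neg_mul]
        exact integral_gaussian _


lemma Fd_reshape (h s z : ℝ) (hs0 : 0 < s) (hs1 : s < 1) :
    phi z * Fd h s z
      = (2 / (Real.sqrt s * Real.sqrt (1 - s) ^ 3))
        * (G ((h + Real.sqrt s * z) / Real.sqrt (1 - s))
           * (phi ((h + Real.sqrt s * z) / Real.sqrt (1 - s)) * phi z)
           * (z + h * Real.sqrt s)) := by
  have h1s : (0:ℝ) < 1 - s := by linarith
  have htp : 0 < Real.sqrt s := Real.sqrt_pos.2 hs0
  have hrp : 0 < Real.sqrt (1 - s) := Real.sqrt_pos.2 h1s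
  have ht2 : Real.sqrt s ^ 2 = s := Real.sq_sqrt hs0.le
  have hr2 : Real.sqrt (1 - s) ^ 2 = 1 - s := Real.sq_sqrt h1s.le
  unfold Fd
  set G1 := G ((h + Real.sqrt s * z) / Real.sqrt (1 - s))
  set P1 := phi ((h + Real.sqrt s * z) / Real.sqrt (1 - s))
  set P2 := phi z
  rw [← hr2]
  field_simp
  rw [Real.sqrt_sq hrp.le]
  linear_combination (4 * P2 * G1 * P1 * Real.sqrt (1 - s) ^ 2 * z) * (ht2 + hr2)

end Stmt8

set_option maxHeartbeats 2000000 in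
theorem stmt_8 (h s : ℝ) (hs0 : 0 < s) (hs1 : s < 1) :
    HasDerivAt
      (fun u => ∫ z', (∫ z, sgn (h + Real.sqrt u * z' + Real.sqrt (1 - u) * z)
          ∂(gaussianReal 0 1)) ^ 2 ∂(gaussianReal 0 1))
      ((2 / (Real.pi * Real.sqrt (1 - s ^ 2))) * Real.exp (-h ^ 2 / (1 + s))) s := by
  classical
  have h1s : (0:ℝ) < 1 - s := by linarith
  -- Step A : eventual equality with the smooth version
  have hEq : (fun u => ∫ z', (∫ z, sgn (h + Real.sqrt u * z' + Real.sqrt (1 - u) * z)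
          ∂(gaussianReal 0 1)) ^ 2 ∂(gaussianReal 0 1))
      =ᶠ[nhds s] fun u => ∫ z', Stmt8.Fu h u z' ∂(gaussianReal 0 1) := by
    filter_upwards [Ioo_mem_nhds hs0 hs1] with u hu
    apply integral_congr_ae
    filter_upwards with z'
    have hσ : 0 < Real.sqrt (1 - u) := Real.sqrt_pos.2 (by linarith [hu.2])
    rw [Stmt8.integral_sgn (h + Real.sqrt u * z') _ hσ]
    rfl
  -- Step B : differentiate under the integral sign
  set ε := min s (1 - s) / 2 with hεdef
  have hεpos : 0 < ε := by
    rw [hεdef]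
    have := lt_min hs0 h1s
    positivity
  have hball : ∀ u ∈ Metric.ball s ε, s / 2 ≤ u ∧ u ≤ (1 + s) / 2 := by
    intro u hu
    rw [Metric.mem_ball, Real.dist_eq, abs_lt] at hu
    have h1 : ε ≤ s / 2 := by
      rw [hεdef]; have := min_le_left s (1 - s); linarith
    have h2 : ε ≤ (1 - s) / 2 := by
      rw [hεdef]; have := min_le_right s (1 - s); linarith
    constructor <;> linarith [hu.1, hu.2]
  have hball' : ∀ u ∈ Metric.ball s ε, 0 < u ∧ u < 1 := by
    intro u hu
    obtain ⟨h1, h2⟩ := hball u hu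
    constructor <;> nlinarith
  set a0 := Real.sqrt (s / 2) * Real.sqrt ((1 - s) / 2) with ha0def
  set b0 := ((1 - s) / 2) * Real.sqrt ((1 - s) / 2) with hb0def
  have ha0p : 0 < a0 := by
    rw [ha0def]
    have h1 : 0 < Real.sqrt (s / 2) := Real.sqrt_pos.2 (by linarith)
    have h2 : 0 < Real.sqrt ((1 - s) / 2) := Real.sqrt_pos.2 (by linarith)
    positivity
  have hb0p : 0 < b0 := by
    rw [hb0def]
    have h2 : 0 < Real.sqrt ((1 - s) / 2) := Real.sqrt_pos.2 (by linarith)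
    positivity
  have hwcont : ∀ u : ℝ, Continuous (fun z : ℝ => (h + Real.sqrt u * z) / Real.sqrt (1 - u)) := by
    intro u; fun_prop
  have hF_meas : ∀ᶠ u in nhds s, AEStronglyMeasurable (fun z => Stmt8.Fu h u z)
      (gaussianReal 0 1) := by
    filter_upwards with u
    exact (((Stmt8.G_cont.comp (hwcont u)).pow 2)).aestronglyMeasurable
  have hF_int : Integrable (fun z => Stmt8.Fu h s z) (gaussianReal 0 1) := by
    apply (integrable_const (1:ℝ)).mono'
      (((Stmt8.G_cont.comp (hwcont s)).pow 2)).aestronglyMeasurable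
    filter_upwards with z
    rw [Real.norm_eq_abs]
    simp only [Pi.pow_apply, Function.comp_apply]
    rw [abs_pow]
    calc |Stmt8.G ((h + Real.sqrt s * z) / Real.sqrt (1 - s))| ^ 2 ≤ 1 ^ 2 :=
        pow_le_pow_left₀ (abs_nonneg _) (Stmt8.abs_G_le_one _) 2
      _ = 1 := one_pow 2
  have hFd_cont : ∀ u : ℝ, Continuous (fun z => Stmt8.Fd h u z) := by
    intro u
    unfold Stmt8.Fd
    apply Continuous.mul
    · exact (continuous_const.mul (Stmt8.G_cont.comp (hwcont u))).mul
        (Stmt8.phi_cont.comp (hwcont u))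
    · fun_prop
  have hF'_meas : AEStronglyMeasurable (fun z => Stmt8.Fd h s z) (gaussianReal 0 1) :=
    (hFd_cont s).aestronglyMeasurable
  have h_bound : ∀ᵐ z ∂(gaussianReal 0 1), ∀ u ∈ Metric.ball s ε,
      ‖Stmt8.Fd h u z‖ ≤ 2 * |h| / b0 + (2 / a0 + 2 / b0) * |z| := by
    filter_upwards with z
    intro u hu
    obtain ⟨hl, hrr⟩ := hball u hu
    obtain ⟨hu0, hu1⟩ := hball' u hu
    have h1u : (0:ℝ) < 1 - u := by linarith
    have hsu : Real.sqrt (s / 2) ≤ Real.sqrt u := Real.sqrt_le_sqrt hl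
    have hsv : Real.sqrt ((1 - s) / 2) ≤ Real.sqrt (1 - u) := Real.sqrt_le_sqrt (by linarith)
    have hvp : 0 < Real.sqrt (1 - u) := Real.sqrt_pos.2 h1u
    have hup : 0 < Real.sqrt u := Real.sqrt_pos.2 hu0
    have hu_le : Real.sqrt u ≤ 1 := by
      rw [show (1:ℝ) = Real.sqrt 1 by simp]
      exact Real.sqrt_le_sqrt (by linarith)
    have hprod : a0 ≤ Real.sqrt u * Real.sqrt (1 - u) := by
      rw [ha0def]
      apply mul_le_mul hsu hsv (Real.sqrt_nonneg _) hup.le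
    have hprod2 : b0 ≤ (1 - u) * Real.sqrt (1 - u) := by
      rw [hb0def]
      apply mul_le_mul (by linarith) hsv (Real.sqrt_nonneg _) h1u.le
    have hE : |z / (2 * Real.sqrt u * Real.sqrt (1 - u))
        + (h + Real.sqrt u * z) / (2 * (1 - u) * Real.sqrt (1 - u))|
        ≤ |z| / (2 * a0) + (|h| + |z|) / (2 * b0) := by
      apply (abs_add_le _ _).trans
      apply add_le_add
      · rw [abs_div, abs_of_nonneg (by positivity : (0:ℝ) ≤ 2 * Real.sqrt u * Real.sqrt (1 - u))]
        apply div_le_div_of_nonneg_left (abs_nonneg z) (by positivity)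
        nlinarith
      · rw [abs_div, abs_of_nonneg (by positivity : (0:ℝ) ≤ 2 * (1 - u) * Real.sqrt (1 - u))]
        have hnum : |h + Real.sqrt u * z| ≤ |h| + |z| := by
          apply (abs_add_le _ _).trans
          have hz2 : |Real.sqrt u * z| ≤ |z| := by
            rw [abs_mul, abs_of_nonneg hup.le]
            nlinarith [abs_nonneg z]
          linarith
        exact div_le_div₀ (by positivity) hnum (by positivity) (by linarith)
    rw [Real.norm_eq_abs]
    calc |Stmt8.Fd h u z|
        = 4 * |Stmt8.G ((h + Real.sqrt u * z) / Real.sqrt (1 - u))|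
          * |Stmt8.phi ((h + Real.sqrt u * z) / Real.sqrt (1 - u))|
          * |z / (2 * Real.sqrt u * Real.sqrt (1 - u))
              + (h + Real.sqrt u * z) / (2 * (1 - u) * Real.sqrt (1 - u))| := by
          unfold Stmt8.Fd
          rw [abs_mul, abs_mul, abs_mul]
          norm_num
      _ ≤ 4 * 1 * 1 * (|z| / (2 * a0) + (|h| + |z|) / (2 * b0)) := by
          gcongr
          · exact Stmt8.abs_G_le_one _
          · rw [abs_of_nonneg (Stmt8.phi_nonneg _)]
            exact Stmt8.phi_le_one _
      _ = 2 * |h| / b0 + (2 / a0 + 2 / b0) * |z| := by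
          field_simp
          ring
  have hbound_int : Integrable (fun z => 2 * |h| / b0 + (2 / a0 + 2 / b0) * |z|)
      (gaussianReal 0 1) := by
    rw [Stmt8.integrable_gaussianReal_iff]
    exact Stmt8.integrable_phi_mul_linear _ _
  have h_diff : ∀ᵐ z ∂(gaussianReal 0 1), ∀ u ∈ Metric.ball s ε,
      HasDerivAt (fun v => Stmt8.Fu h v z) (Stmt8.Fd h u z) u := by
    filter_upwards with z
    intro u hu
    obtain ⟨hu0, hu1⟩ := hball' u hu
    exact Stmt8.hasDeriv_Fu h z hu0 hu1
  obtain ⟨-, hder⟩ := hasDerivAt_integral_of_dominated_loc_of_deriv_le (Metric.ball_mem_nhds s hεpos) hF_meas hF_int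
    hF'_meas h_bound hbound_int h_diff
  -- Step C : evaluate the integral of the derivative
  have hC : ∫ z, Stmt8.Fd h s z ∂(gaussianReal 0 1)
      = (2 / (Real.pi * Real.sqrt (1 - s ^ 2))) * Real.exp (-h ^ 2 / (1 + s)) := by
    set t := Real.sqrt s with htdef
    set r := Real.sqrt (1 - s) with hrdef
    have htp : 0 < t := Real.sqrt_pos.2 hs0
    have hrp : 0 < r := Real.sqrt_pos.2 h1s
    have ht2 : t ^ 2 = s := Real.sq_sqrt hs0.le
    have hr2 : r ^ 2 = 1 - s := Real.sq_sqrt h1s.le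
    have htr : t ^ 2 + r ^ 2 = 1 := by rw [ht2, hr2]; ring
    have step1 : ∫ z, Stmt8.Fd h s z ∂(gaussianReal 0 1)
        = (2 / (t * r ^ 3)) * ∫ z, Stmt8.G ((h + t * z) / r)
            * (Stmt8.phi ((h + t * z) / r) * Stmt8.phi z) * (z + h * t) := by
      rw [Stmt8.integral_gaussianReal_eq, ← integral_const_mul]
      apply integral_congr_ae
      filter_upwards with z
      exact Stmt8.Fd_reshape h s z hs0 hs1
    have hK : ∫ z, Stmt8.G ((h + t * z) / r) * (Stmt8.phi ((h + t * z) / r) * Stmt8.phi z)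
        * (z + h * t)
        = 2 * t * r * ∫ z, Stmt8.phi ((h + t * z) / r) ^ 2 * Stmt8.phi z := by
      have h0 := Stmt8.integral_PsiD h t r htr hrp.ne'
      have hY := Stmt8.I2_int h t r hrp.ne'
      have hX := Stmt8.I1_int h t r
      have h1 : ∫ z, Stmt8.PsiD h t r z
          = (2 * (t / r)) * (∫ z, Stmt8.phi ((h + t * z) / r) ^ 2 * Stmt8.phi z)
            - ∫ z, Stmt8.G ((h + t * z) / r) * (Stmt8.phi ((h + t * z) / r) * Stmt8.phi z)
                * ((z + h * t) / r ^ 2) := by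
        rw [← integral_const_mul, ← integral_sub (hX.const_mul _) hY]
        apply integral_congr_ae
        filter_upwards with z
        unfold Stmt8.PsiD
        ring
      have h2 : ∫ z, Stmt8.G ((h + t * z) / r) * (Stmt8.phi ((h + t * z) / r) * Stmt8.phi z)
          * ((z + h * t) / r ^ 2)
          = (1 / r ^ 2) * ∫ z, Stmt8.G ((h + t * z) / r)
              * (Stmt8.phi ((h + t * z) / r) * Stmt8.phi z) * (z + h * t) := by
        rw [← integral_const_mul]
        apply integral_congr_ae
        filter_upwards with z
        ring
      rw [h1, h2] at h0
      have hrr : ((1:ℝ) / r ^ 2) ≠ 0 := by positivity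
      have heq2 : (1 / r ^ 2) * (2 * t * r * ∫ z, Stmt8.phi ((h + t * z) / r) ^ 2 * Stmt8.phi z)
          = 2 * (t / r) * ∫ z, Stmt8.phi ((h + t * z) / r) ^ 2 * Stmt8.phi z := by
        field_simp
      apply mul_left_cancel₀ hrr
      rw [heq2]
      linarith
    rw [step1, hK, Stmt8.J_eval h t r hrp htr, ht2, hr2]
    have h1s2 : (0:ℝ) < 1 - s ^ 2 := by nlinarith
    have hsq2pi : (0:ℝ) < Real.sqrt (2 * Real.pi) := Real.sqrt_pos.2 (by positivity)
    have hconst : ((Real.sqrt (2 * Real.pi))⁻¹) ^ 3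
        * Real.sqrt (Real.pi / ((1 + s) / (2 * (1 - s)))) * (4 / (1 - s))
        = 2 / (Real.pi * Real.sqrt (1 - s ^ 2)) := by
      have hπ : (0:ℝ) < Real.pi := Real.pi_pos
      have h2pi : Real.sqrt (2 * Real.pi) ^ 2 = 2 * Real.pi := Real.sq_sqrt (by positivity)
      have hL : (0:ℝ) ≤ ((Real.sqrt (2 * Real.pi))⁻¹) ^ 3
          * Real.sqrt (Real.pi / ((1 + s) / (2 * (1 - s)))) * (4 / (1 - s)) := by positivity
      have hR : (0:ℝ) ≤ 2 / (Real.pi * Real.sqrt (1 - s ^ 2)) := by positivity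
      have e1 : (((Real.sqrt (2 * Real.pi))⁻¹) ^ 3) ^ 2 = ((2 * Real.pi) ^ 3)⁻¹ := by
        calc (((Real.sqrt (2 * Real.pi))⁻¹) ^ 3) ^ 2 = ((Real.sqrt (2 * Real.pi))⁻¹) ^ 6 := by ring
          _ = ((Real.sqrt (2 * Real.pi)) ^ 6)⁻¹ := by rw [inv_pow]
          _ = (((Real.sqrt (2 * Real.pi)) ^ 2) ^ 3)⁻¹ := by rw [← pow_mul]
          _ = ((2 * Real.pi) ^ 3)⁻¹ := by rw [h2pi]
      have e2 : (Real.sqrt (Real.pi / ((1 + s) / (2 * (1 - s))))) ^ 2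
          = Real.pi / ((1 + s) / (2 * (1 - s))) := by
        apply Real.sq_sqrt
        positivity
      have e3 : (Real.sqrt (1 - s ^ 2)) ^ 2 = 1 - s ^ 2 := Real.sq_sqrt (by nlinarith)
      rw [← Real.sqrt_sq hL, ← Real.sqrt_sq hR]
      congr 1
      rw [mul_pow, mul_pow, div_pow, div_pow, mul_pow, e1, e2, e3]
      have h1s2 : (0:ℝ) < 1 - s ^ 2 := by nlinarith
      field_simp
      ring
    calc 2 / (t * r ^ 3) * (2 * t * r
          * (((Real.sqrt (2 * Real.pi))⁻¹) ^ 3 * Real.exp (-h ^ 2 / (1 + s))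
            * Real.sqrt (Real.pi / ((1 + s) / (2 * (1 - s))))))
        = (((Real.sqrt (2 * Real.pi))⁻¹) ^ 3
            * Real.sqrt (Real.pi / ((1 + s) / (2 * (1 - s)))) * (4 / (1 - s)))
          * Real.exp (-h ^ 2 / (1 + s)) := by
          rw [← hr2]
          field_simp
          ring
      _ = (2 / (Real.pi * Real.sqrt (1 - s ^ 2))) * Real.exp (-h ^ 2 / (1 + s)) := by
          rw [hconst]
  rw [← hC]
  exact hder.congr_of_eventuallyEq hEq
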